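/- If p_1 > p_2 are coprime, p_1 = a·p_2 + b with 0 < b < p_2, and c = 1 (d'Hondt), then the apportionment sequence over one period is 1^a 2 1^{k_2} 2 ... 1^{k_{p_2}} 2, where k_i = a + 1 if i ∈ {⌈p_2/b⌉, ⌈2p_2/b⌉, ..., ⌈b·p_2/b⌉} and k_i = a otherwise. -/

import Mathlib

open ENNReal

/-- Number of seats party `i` holds after the first `h` seats of sequence `s`. -/
def alloc {n : ℕ} (s : ℕ → Fin n) (i : Fin n) (h : ℕ) : ℕ :=
  ((Finset.range h).filter (fun t => s t = i)).card

/-- `s` is the apportionment sequence of the stationary divisor method with cut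
point `c` for votes `p`: each seat goes to the party maximizing `pᵢ/(aᵢ+c)`
(computed in `ℝ≥0∞`, so that `pᵢ/0 = ∞` encodes the Adams convention), with
ties broken in favor of the smaller index. -/
def IsStationarySeq {n : ℕ} (p : Fin n → ℕ) (c : NNReal) (s : ℕ → Fin n) : Prop :=
  ∀ h : ℕ, ∀ j : Fin n,
    (p j : ℝ≥0∞) / ((alloc s j h : ℝ≥0∞) + (c : ℝ≥0∞)) <
        (p (s h) : ℝ≥0∞) / ((alloc s (s h) h : ℝ≥0∞) + (c : ℝ≥0∞)) ∨
    ((p (s h) : ℝ≥0∞) / ((alloc s (s h) h : ℝ≥0∞) + (c : ℝ≥0∞)) =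
        (p j : ℝ≥0∞) / ((alloc s j h : ℝ≥0∞) + (c : ℝ≥0∞)) ∧ s h ≤ j)


open Finset

private lemma ratio_lt (m n x y : ℕ) :
    ((m:ℝ≥0∞)/((x:ℝ≥0∞)+1) < (n:ℝ≥0∞)/((y:ℝ≥0∞)+1)) ↔ m * (y+1) < n * (x+1) := by
  have hx : ((x:ℝ≥0∞)+1) ≠ 0 := by simp
  have hy : ((y:ℝ≥0∞)+1) ≠ 0 := by simp
  have hx' : ((x:ℝ≥0∞)+1) ≠ ⊤ := by simp
  have hy' : ((y:ℝ≥0∞)+1) ≠ ⊤ := by simp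
  rw [ENNReal.div_lt_iff (Or.inl hx) (Or.inl hx'),
    mul_comm ((n:ℝ≥0∞)/((y:ℝ≥0∞)+1)), ← mul_div_assoc,
    ENNReal.lt_div_iff_mul_lt (Or.inl hy) (Or.inl hy')]
  rw [show ((m:ℝ≥0∞) * ((y:ℝ≥0∞)+1)) = ((m*(y+1) : ℕ) : ℝ≥0∞) by push_cast; ring,
    show (((x:ℝ≥0∞)+1) * (n:ℝ≥0∞)) = ((n*(x+1) : ℕ) : ℝ≥0∞) by push_cast; ring]
  exact_mod_cast Iff.rfl

private lemma ratio_le (m n x y : ℕ) :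
    ((m:ℝ≥0∞)/((x:ℝ≥0∞)+1) ≤ (n:ℝ≥0∞)/((y:ℝ≥0∞)+1)) ↔ m * (y+1) ≤ n * (x+1) := by
  rw [← not_lt, ← not_lt, not_iff_not, ratio_lt]

private lemma alloc_sum (s : ℕ → Fin 2) (t : ℕ) : alloc s 0 t + alloc s 1 t = t := by
  classical
  have h2 : ∀ v : Fin 2, (v = 1 ↔ ¬ v = 0) := by decide
  unfold alloc
  rw [Finset.filter_congr (fun x _ => h2 (s x)),
    Finset.card_filter_add_card_filter_not, Finset.card_range]

private lemma alloc_succ (s : ℕ → Fin 2) (i : Fin 2) (t : ℕ) :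
    alloc s i (t+1) = alloc s i t + (if s t = i then 1 else 0) := by
  classical
  unfold alloc
  rw [Finset.range_add_one, Finset.filter_insert]
  by_cases h : s t = i
  · rw [if_pos h, if_pos h, Finset.card_insert_of_notMem (by simp)]
  · rw [if_neg h, if_neg h, Nat.add_zero]

private lemma sum_kif (p2 a b : ℕ) (hb0 : 0 < b) (hbp : b < p2)
    (i : ℕ) (hi1 : 1 ≤ i) (hip2 : i ≤ p2) :
    (∑ j ∈ Icc 1 i,
        (if ∃ j' ∈ Icc 1 b, j = (j' * p2 + b - 1) / b then a + 1 else a)) + i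
      = i + i * (a * p2 + b) / p2 := by
  have hp2pos : 0 < p2 := by omega
  have hdiv : i * (a*p2+b) / p2 = i*a + i*b/p2 := by
    have h1 : i*(a*p2+b) = i*b + (i*a)*p2 := by ring
    rw [h1, Nat.add_mul_div_right _ _ hp2pos]
    exact Nat.add_comm _ _
  have hcle : ∀ j' I : ℕ, 1 ≤ j' → ((j'*p2 + b - 1)/b ≤ I ↔ j'*p2 ≤ I*b) := by
    intro j' I hj'
    rw [Nat.div_le_iff_le_mul_add_pred hb0]
    have h1 : b*I = I*b := by ring
    have h2 : 1*1 ≤ j'*p2 := Nat.mul_le_mul hj' hp2pos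
    omega
  have key : ∀ m, m ≤ p2 →
      (∑ j ∈ Icc 1 m,
        (if ∃ j' ∈ Icc 1 b, j = (j' * p2 + b - 1) / b then a + 1 else a))
      = a*m + m*b/p2 := by
    intro m
    induction m with
    | zero =>
      intro _
      have h1 : (0:ℕ)*b = 0 := by ring
      have h2 : a*0 = 0 := by ring
      simp [h1, h2]
    | succ m ihm =>
      intro hm
      have ihm' := ihm (by omega)
      rw [Finset.sum_Icc_succ_top (by omega : 1 ≤ m+1), ihm']
      -- floor facts
      obtain ⟨D1, hD1⟩ : ∃ D, m*b/p2 = D := ⟨_, rfl⟩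
      obtain ⟨D2, hD2⟩ : ∃ D, (m+1)*b/p2 = D := ⟨_, rfl⟩
      have hmono : D1 ≤ D2 := by
        rw [← hD1, ← hD2]
        exact Nat.div_le_div_right (Nat.mul_le_mul (by omega) le_rfl)
      have hstep : D2 ≤ D1 + 1 := by
        rw [← hD1, ← hD2]
        have h1 : (m+1)*b ≤ m*b + p2 := by
          have h2 : (m+1)*b = m*b + b := by ring
          omega
        calc (m+1)*b/p2 ≤ (m*b + p2)/p2 := Nat.div_le_div_right h1
          _ = m*b/p2 + 1 := Nat.add_div_right _ hp2pos
      have hiff : (∃ j' ∈ Icc 1 b, m+1 = (j' * p2 + b - 1) / b) ↔ D1 < D2 := by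
        constructor
        · rintro ⟨j', hj'mem, hj'eq⟩
          rw [mem_Icc] at hj'mem
          obtain ⟨hj'1, hj'b⟩ := hj'mem
          have hle : (j'*p2 + b - 1)/b ≤ m+1 := le_of_eq hj'eq.symm
          have hgt : ¬ ((j'*p2 + b - 1)/b ≤ m) := by omega
          have h1 : j'*p2 ≤ (m+1)*b := (hcle j' (m+1) hj'1).1 hle
          have h2 : ¬ (j'*p2 ≤ m*b) := fun hc => hgt ((hcle j' m hj'1).2 hc)
          have h3 : m*b/p2 < j' := (Nat.div_lt_iff_lt_mul hp2pos).2 (by omega)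
          have h4 : j' ≤ (m+1)*b/p2 := (Nat.le_div_iff_mul_le hp2pos).2 h1
          omega
        · intro hlt
          refine ⟨(m+1)*b/p2, ?_, ?_⟩
          · rw [mem_Icc]
            constructor
            · omega
            · rw [hD2]
              have h1 : (m+1)*b ≤ p2*b := Nat.mul_le_mul hm le_rfl
              have h2 : p2*b/p2 = b := Nat.mul_div_cancel_left _ hp2pos
              calc D2 = (m+1)*b/p2 := hD2.symm
                _ ≤ p2*b/p2 := Nat.div_le_div_right h1
                _ = b := h2
          · have hj'1 : 1 ≤ (m+1)*b/p2 := by omega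
            have hle : ((m+1)*b/p2*p2 + b - 1)/b ≤ m+1 :=
              (hcle ((m+1)*b/p2) (m+1) (by rw [hD2]; omega)).2 (Nat.div_mul_le_self _ _)
            have hgt : ¬ (((m+1)*b/p2*p2 + b - 1)/b ≤ m) := by
              intro hc
              have h1 : (m+1)*b/p2*p2 ≤ m*b := (hcle ((m+1)*b/p2) m (by rw [hD2]; omega)).1 hc
              have h2 : m*b < (m+1)*b/p2*p2 := by
                have h3 : m*b/p2 < (m+1)*b/p2 := by omega
                exact (Nat.div_lt_iff_lt_mul hp2pos).1 h3
              omega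
            omega
      by_cases h : ∃ j' ∈ Icc 1 b, m+1 = (j' * p2 + b - 1) / b
      · rw [if_pos h]
        have hlt := hiff.1 h
        rw [hD1, hD2]
        have h1 : a*(m+1) = a*m + a := by ring
        omega
      · rw [if_neg h]
        have hnlt : ¬ (D1 < D2) := fun hc => h (hiff.2 hc)
        rw [hD1, hD2]
        have h1 : a*(m+1) = a*m + a := by ring
        omega
  rw [key i hip2, hdiv]
  have hcomm : a*i = i*a := Nat.mul_comm a i
  generalize i * b / p2 = D
  omega

/-- Explicit description of the d'Hondt (`c = 1`) two-party sequence: with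
`p_1 = a·p_2 + b`, `0 < b < p_2`, one period is `1^a 2 1^{k_2} 2 ⋯ 1^{k_{p_2}} 2`
where `k_i = a + 1` iff `i ∈ {⌈j·p_2/b⌉ : j = 1, …, b}` and `k_i = a`
otherwise.  Party `0` is party 1 and party `1` is party 2; the `i`-th seat for
party 2 occupies position `Σ_{j≤i} k_j + i` (1-indexed). -/
theorem dhondt_explicit_sequence (p1 p2 a b : ℕ) (hco : Nat.Coprime p1 p2)
    (hp2 : 2 ≤ p2) (h12 : p2 < p1)
    (hdiv : p1 = a * p2 + b) (hb0 : 0 < b) (hbp : b < p2)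
    (s : ℕ → Fin 2) (hs : IsStationarySeq ![p1, p2] 1 s) :
    ∀ t, t < p1 + p2 →
      (s t = 1 ↔ ∃ i, 1 ≤ i ∧ i ≤ p2 ∧
        t + 1 = (∑ j ∈ Icc 1 i,
          (if ∃ j' ∈ Icc 1 b, j = (j' * p2 + b - 1) / b then a + 1 else a)) + i) := by
  classical
  have hp2pos : 0 < p2 := by omega
  have hp1pos : 0 < p1 := by omega
  have hNpos : 0 < p1 + p2 := by omega
  have hfin : ∀ v : Fin 2, v = 0 ∨ v = 1 := by decide
  -- the seat-by-seat comparison in natural numbers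
  have hkey : ∀ t, (s t = 1 ↔ p1 * (alloc s 1 t + 1) < p2 * (alloc s 0 t + 1)) := by
    intro t
    constructor
    · intro h1
      have h := hs t 0
      rw [h1] at h
      simp only [Matrix.cons_val_zero, Matrix.cons_val_one, Matrix.head_cons,
        ENNReal.coe_one] at h
      rcases h with h | h
      · exact (ratio_lt p1 p2 (alloc s 0 t) (alloc s 1 t)).1 h
      · exact absurd h.2 (by decide)
    · intro hlt
      rcases hfin (s t) with h0 | h1
      · exfalso
        have h := hs t 1
        rw [h0] at h
        simp only [Matrix.cons_val_zero, Matrix.cons_val_one, Matrix.head_cons,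
          ENNReal.coe_one] at h
        have hle : (p2:ℝ≥0∞) / ((alloc s 1 t : ℝ≥0∞) + 1)
            ≤ (p1:ℝ≥0∞)/((alloc s 0 t : ℝ≥0∞) + 1) := by
          rcases h with h | h
          · exact le_of_lt h
          · exact le_of_eq h.1.symm
        have := (ratio_le p2 p1 (alloc s 1 t) (alloc s 0 t)).1 hle
        omega
      · exact h1
  have hallocsum : ∀ t, alloc s 0 t + alloc s 1 t = t := alloc_sum s
  -- arithmetic characterizations
  have hWle : ∀ i u : ℕ, 1 ≤ u → (i ≤ (u*p2 - 1)/(p1+p2) ↔ i * (p1+p2) < u * p2) := by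
    intro i u hu
    rw [Nat.le_div_iff_mul_le hNpos]
    have h1 : 1*1 ≤ u*p2 := Nat.mul_le_mul hu hp2pos
    omega
  have hstar : ∀ i t : ℕ, (i + i * p1 / p2 ≤ t ↔ i * (p1+p2) < (t+1) * p2) := by
    intro i t
    obtain ⟨D, hD⟩ : ∃ D, i*p1/p2 = D := ⟨_, rfl⟩
    rw [hD]
    by_cases hit : i ≤ t
    · have h2 : i*p1/p2 < t - i + 1 ↔ i*p1 < (t-i+1)*p2 := Nat.div_lt_iff_lt_mul hp2pos
      rw [hD] at h2
      have h3 : (t-i+1)*p2 + i*p2 = (t+1)*p2 := by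
        rw [← add_mul]; congr 1; omega
      have h4 : i*(p1+p2) = i*p1 + i*p2 := by ring
      omega
    · have h5 : (t+1)*(p1+p2) ≤ i*(p1+p2) := Nat.mul_le_mul (by omega) le_rfl
      have h6 : (t+1)*(p1+p2) = (t+1)*p1 + (t+1)*p2 := by ring
      have h7 : 1*1 ≤ (t+1)*p1 := Nat.mul_le_mul (by omega) hp1pos
      omega
  have hWlt : ∀ t, t < p1 + p2 → ((t+1)*p2 - 1)/(p1+p2) < p2 := by
    intro t ht
    rw [Nat.div_lt_iff_lt_mul hNpos]
    have h1 : (t+1)*p2 ≤ (p1+p2)*p2 := Nat.mul_le_mul (by omega) le_rfl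
    have h2 : p2*(p1+p2) = (p1+p2)*p2 := by ring
    have h3 : 1*1 ≤ (p1+p2)*p2 := Nat.mul_le_mul hNpos hp2pos
    omega
  -- what happens at a single step
  have hseat : ∀ t, t < p1+p2 → alloc s 1 t = ((t+1)*p2-1)/(p1+p2) →
      (s t = 1 ↔ (((t+1)*p2-1)/(p1+p2) + 1)*(p1+p2) < (t+2)*p2) := by
    intro t ht hA
    obtain ⟨k, hk⟩ : ∃ k, ((t+1)*p2-1)/(p1+p2) = k := ⟨_, rfl⟩
    rw [hk] at hA ⊢
    have hk1 : k*(p1+p2) < (t+1)*p2 := (hWle k (t+1) (by omega)).1 (le_of_eq hk.symm)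
    have hk_t : k ≤ t := by
      have h2 : k*p2 ≤ k*(p1+p2) := Nat.mul_le_mul le_rfl (by omega)
      have h3 : k*p2 < (t+1)*p2 := lt_of_le_of_lt h2 hk1
      exact Nat.lt_succ_iff.mp (Nat.lt_of_mul_lt_mul_right h3)
    have hA0 : alloc s 0 t = t - k := by have := hallocsum t; omega
    rw [hkey t, hA, hA0]
    have e1 : (k+1)*(p1+p2) = p1*(k+1) + p2*(k+1) := by ring
    have e2 : p2*(t-k+1) + p2*(k+1) = (t+2)*p2 := by
      rw [← Nat.mul_add, Nat.mul_comm]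
      congr 1
      omega
    omega
  -- the running allocation of party 2
  have main : ∀ t, t ≤ p1 + p2 → alloc s 1 t = min p2 (((t+1)*p2 - 1)/(p1+p2)) := by
    intro t
    induction t with
    | zero =>
      intro _
      have h0 : ((0+1)*p2 - 1)/(p1+p2) = 0 := Nat.div_eq_of_lt (by omega)
      rw [h0]
      simp [alloc]
    | succ t ih =>
      intro ht1
      have ht : t < p1 + p2 := by omega
      obtain ⟨k, hk⟩ : ∃ k, ((t+1)*p2-1)/(p1+p2) = k := ⟨_, rfl⟩
      obtain ⟨V, hV⟩ : ∃ V, ((t+2)*p2-1)/(p1+p2) = V := ⟨_, rfl⟩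
      have hwt : k < p2 := hk ▸ hWlt t ht
      have ihW : alloc s 1 t = k := by
        have := ih (by omega)
        rw [hk] at this
        omega
      have hst := hseat t ht (by rw [hk]; exact ihW)
      rw [hk] at hst
      have hmono : k ≤ V := by
        rw [← hk, ← hV]
        apply Nat.div_le_div_right
        have h2 : (t+2)*p2 = (t+1)*p2 + p2 := by ring
        omega
      have hstep1 : V ≤ k + 1 := by
        rw [← hk, ← hV]
        have h1 : (t+2)*p2 - 1 ≤ (t+1)*p2 - 1 + (p1+p2) := by
          have h2 : (t+2)*p2 = (t+1)*p2 + p2 := by ring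
          omega
        calc ((t+2)*p2-1)/(p1+p2) ≤ ((t+1)*p2-1 + (p1+p2))/(p1+p2) :=
              Nat.div_le_div_right h1
          _ = ((t+1)*p2-1)/(p1+p2) + 1 := Nat.add_div_right _ hNpos
      have hbr : ((t+1+1)*p2-1)/(p1+p2) = V := by
        rw [← hV]
      have hsucc := alloc_succ s 1 t
      rw [hbr, hsucc, ihW]
      rcases hfin (s t) with h0 | h1
      · have hnot : ¬ s t = 1 := by rw [h0]; decide
        have hc : ¬ ((k + 1)*(p1+p2) < (t+2)*p2) := fun hc => hnot (hst.2 hc)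
        have hW2 : ¬ (k + 1 ≤ V) := by
          rw [← hV, hWle (k+1) (t+2) (by omega)]
          exact hc
        have hif : (if s t = 1 then 1 else 0) = 0 := by rw [h0]; decide
        rw [hif]
        omega
      · have hlt := hst.1 h1
        have hW2 : k + 1 ≤ V := by
          rw [← hV, hWle (k+1) (t+2) (by omega)]
          exact hlt
        have hif : (if s t = 1 then 1 else 0) = 1 := by rw [h1]; decide
        rw [hif]
        omega
  -- final statement
  intro t ht
  obtain ⟨k, hk⟩ : ∃ k, ((t+1)*p2-1)/(p1+p2) = k := ⟨_, rfl⟩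
  have hwt : k < p2 := hk ▸ hWlt t ht
  have hA : alloc s 1 t = k := by
    have := main t (by omega)
    rw [hk] at this
    omega
  have hst := hseat t ht (by rw [hk]; exact hA)
  rw [hk] at hst
  have hk1 : k*(p1+p2) < (t+1)*p2 := (hWle k (t+1) (by omega)).1 (le_of_eq hk.symm)
  have heq2 : (t+1+1)*p2 = (t+2)*p2 := by ring
  constructor
  · intro h1
    have hlt := hst.1 h1
    obtain ⟨D, hD⟩ : ∃ D, (k+1)*p1/p2 = D := ⟨_, rfl⟩
    have hgle : (k+1) + D ≤ t+1 := by
      rw [← hD, hstar (k+1) (t+1)]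
      omega
    have hgt : ¬ ((k+1) + D ≤ t) := by
      rw [← hD, hstar (k+1) t]
      intro hc
      have h := (hWle (k+1) (t+1) (by omega)).2 hc
      rw [hk] at h
      omega
    refine ⟨k+1, by omega, by omega, ?_⟩
    rw [sum_kif p2 a b hb0 hbp (k+1) (by omega) (by omega), ← hdiv, hD]
    omega
  · rintro ⟨i, hi1, hip2, heqt⟩
    rw [sum_kif p2 a b hb0 hbp i hi1 hip2, ← hdiv] at heqt
    obtain ⟨D, hD⟩ : ∃ D, i*p1/p2 = D := ⟨_, rfl⟩
    rw [hD] at heqt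
    have h1' := (hstar i (t+1)).1 (by rw [hD]; omega)
    have h1 : i*(p1+p2) < (t+2)*p2 := by omega
    have h2 : ¬ (i*(p1+p2) < (t+1)*p2) := by
      intro hc
      have h := (hstar i t).2 hc
      rw [hD] at h
      omega
    have h3 : k < i := by
      by_contra hc
      have h4 : i*(p1+p2) ≤ k*(p1+p2) := Nat.mul_le_mul (by omega) le_rfl
      omega
    apply hst.2
    have h5 : i ≤ ((t+2)*p2-1)/(p1+p2) := (hWle i (t+2) (by omega)).2 h1
    have h6 : k+1 ≤ ((t+2)*p2-1)/(p1+p2) := le_trans (by omega) h5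
    exact (hWle (k+1) (t+2) (by omega)).1 h6
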